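/- Let G be a Garside group with positive monoid G⁺ and Garside element Δ, let g ∈ G and n ≥ 1. Suppose s is the least element of {t ∈ ℤ : h ≤_L Δ^t for some conjugate h of g} and u is the least element of {t ∈ ℤ : h ≤_L Δ^t for some conjugate h of gⁿ}. Then n·s − n < u ≤ n·s. Moreover, if in addition r is the greatest element of {t ∈ ℤ : Δ^t ≤_L h for some conjugate h of g} and m is the greatest element of {t ∈ ℤ : Δ^t ≤_L h for some conjugate h of gⁿ}, then n·((s − r) − 2) < u − m ≤ n·(s − r). -/

import Mathlib

/-- `a` left-divides `b` in the monoid `M`. -/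
def dvdL {M : Type*} [Monoid M] (a b : M) : Prop := ∃ c, a * c = b

/-- `a` right-divides `b` in the monoid `M`. -/
def dvdR {M : Type*} [Monoid M] (a b : M) : Prop := ∃ c, c * a = b

/-- `L(a)`, the set of left divisors of `a`. -/
def Lset {M : Type*} [Monoid M] (a : M) : Set M := {x | dvdL x a}

/-- `R(a)`, the set of right divisors of `a`. -/
def Rset {M : Type*} [Monoid M] (a : M) : Set M := {x | dvdR x a}

/-- `a` is an atom: `a ≠ 1` and `a = b * c` implies `b = 1` or `c = 1`. -/
def IsAtomElt {M : Type*} [Monoid M] (a : M) : Prop :=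
  a ≠ 1 ∧ ∀ b c : M, a = b * c → b = 1 ∨ c = 1

/-- `M` is atomic: every element is a finite product of atoms, and the lengths of
expressions of a given element as products of atoms are bounded above. -/
def Atomic (M : Type*) [Monoid M] : Prop :=
  (∀ a : M, ∃ l : List M, (∀ x ∈ l, IsAtomElt x) ∧ l.prod = a) ∧
  (∀ a : M, ∃ N : ℕ, ∀ l : List M, (∀ x ∈ l, IsAtomElt x) → l.prod = a → l.length ≤ N)

/-- `Δ` is a Garside element: `L(Δ) = R(Δ)` and `L(Δ)` generates `M`. -/
def IsGarsideElt {M : Type*} [Monoid M] (Δ : M) : Prop :=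
  Lset Δ = Rset Δ ∧ Submonoid.closure (Lset Δ) = ⊤

/-- `d` is a greatest common lower bound of `a` and `b` with respect to `≤_L`. -/
def IsGlbL {M : Type*} [Monoid M] (a b d : M) : Prop :=
  dvdL d a ∧ dvdL d b ∧ ∀ c : M, dvdL c a → dvdL c b → dvdL c d

/-- `d` is a least common upper bound of `a` and `b` with respect to `≤_L`. -/
def IsLubL {M : Type*} [Monoid M] (a b d : M) : Prop :=
  dvdL a d ∧ dvdL b d ∧ ∀ c : M, dvdL a c → dvdL b c → dvdL d c

/-- `d` is a greatest common lower bound of `a` and `b` with respect to `≤_R`. -/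
def IsGlbR {M : Type*} [Monoid M] (a b d : M) : Prop :=
  dvdR d a ∧ dvdR d b ∧ ∀ c : M, dvdR c a → dvdR c b → dvdR c d

/-- `d` is a least common upper bound of `a` and `b` with respect to `≤_R`. -/
def IsLubR {M : Type*} [Monoid M] (a b d : M) : Prop :=
  dvdR a d ∧ dvdR b d ∧ ∀ c : M, dvdR a c → dvdR b c → dvdR d c

/-- `M` is a Garside monoid: finitely generated, left and right cancellative, atomic,
`≤_L`- and `≤_R`-lattice conditions, and it possesses a Garside element. -/
def IsGarsideMonoid (M : Type*) [Monoid M] : Prop :=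
  (∃ S : Set M, S.Finite ∧ Submonoid.closure S = ⊤) ∧
  (∀ a b c : M, a * b = a * c → b = c) ∧
  (∀ a b c : M, b * a = c * a → b = c) ∧
  Atomic M ∧
  (∀ a b : M, ∃ d, IsGlbL a b d) ∧
  (∀ a b : M, ∃ d, IsLubL a b d) ∧
  (∀ a b : M, ∃ d, IsGlbR a b d) ∧
  (∀ a b : M, ∃ d, IsLubR a b d) ∧
  (∃ Δ : M, IsGarsideElt Δ)

/-- Group-level left divisibility: `a ≤_L b` iff `a⁻¹ * b` is positive. -/
def gdvdL {G : Type*} [Group G] (P : Submonoid G) (a b : G) : Prop := a⁻¹ * b ∈ P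

/-- Group-level right divisibility: `a ≤_R b` iff `b * a⁻¹` is positive. -/
def gdvdR {G : Type*} [Group G] (P : Submonoid G) (a b : G) : Prop := b * a⁻¹ ∈ P

/-- `G` is a Garside group with positive monoid `P` and chosen Garside element `Δ`:
`P` is a Garside monoid, every element of `G` is a fraction `a * b⁻¹` of positive
elements, and `Δ` is a Garside element of `P`. -/
def IsGarsideGroup {G : Type*} [Group G] (P : Submonoid G) (Δ : G) : Prop :=
  IsGarsideMonoid P ∧
  (∀ g : G, ∃ a b : P, g = (a : G) * (b : G)⁻¹) ∧
  ∃ hΔ : Δ ∈ P, IsGarsideElt (⟨Δ, hΔ⟩ : P)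

section GarsideAux

variable {G : Type*} [Group G] {P : Submonoid G} {Δ : G}

lemma garside_zpow_mem (hΔ : Δ ∈ P) {j : ℤ} (hj : 0 ≤ j) : Δ ^ j ∈ P := by
  obtain ⟨k, rfl⟩ := Int.eq_ofNat_of_zero_le hj
  rw [zpow_natCast]
  exact pow_mem hΔ k

lemma garside_tau_pos (hG : IsGarsideGroup P Δ) : ∀ x : G, x ∈ P → Δ⁻¹ * x * Δ ∈ P := by
  obtain ⟨hM, hfrac, hΔ, hLR, hcl⟩ := hG
  intro x hx
  suffices hall : ∀ w : P, Δ⁻¹ * (w : G) * Δ ∈ P by exact hall ⟨x, hx⟩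
  intro w
  have hx' : w ∈ Submonoid.closure (Lset (⟨Δ, hΔ⟩ : P)) := by
    rw [hcl]; exact Submonoid.mem_top _
  induction hx' using Submonoid.closure_induction with
  | one => simpa using one_mem P
  | mul y z hy' hz' py pz =>
    have e : Δ⁻¹ * ((y * z : P) : G) * Δ = (Δ⁻¹ * (y : G) * Δ) * (Δ⁻¹ * (z : G) * Δ) := by
      push_cast; group
    rw [e]; exact mul_mem py pz
  | mem y hy =>
    obtain ⟨c, hc⟩ := hy
    have hcg : (y : G) * (c : G) = Δ := congrArg Subtype.val hc
    have hcR : c ∈ Rset (⟨Δ, hΔ⟩ : P) := ⟨y, hc⟩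
    rw [← hLR] at hcR
    obtain ⟨e, he⟩ := hcR
    have heg : (c : G) * (e : G) = Δ := congrArg Subtype.val he
    have h1 : Δ⁻¹ * (y : G) * Δ = (e : G) := by
      nth_rewrite 1 [← hcg]
      rw [← heg]; group
    rw [h1]; exact e.2

lemma garside_tau_neg (hG : IsGarsideGroup P Δ) : ∀ x : G, x ∈ P → Δ * x * Δ⁻¹ ∈ P := by
  obtain ⟨hM, hfrac, hΔ, hLR, hcl⟩ := hG
  intro x hx
  suffices hall : ∀ w : P, Δ * (w : G) * Δ⁻¹ ∈ P by exact hall ⟨x, hx⟩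
  intro w
  have hx' : w ∈ Submonoid.closure (Lset (⟨Δ, hΔ⟩ : P)) := by
    rw [hcl]; exact Submonoid.mem_top _
  induction hx' using Submonoid.closure_induction with
  | one => simpa using one_mem P
  | mul y z hy' hz' py pz =>
    have e : Δ * ((y * z : P) : G) * Δ⁻¹ = (Δ * (y : G) * Δ⁻¹) * (Δ * (z : G) * Δ⁻¹) := by
      push_cast; group
    rw [e]; exact mul_mem py pz
  | mem y hy =>
    have hyR : y ∈ Rset (⟨Δ, hΔ⟩ : P) := by rw [← hLR]; exact hy
    obtain ⟨c, hc⟩ := hyR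
    have hcg : (c : G) * (y : G) = Δ := congrArg Subtype.val hc
    have hcL : c ∈ Lset (⟨Δ, hΔ⟩ : P) := ⟨y, hc⟩
    rw [hLR] at hcL
    obtain ⟨e, he⟩ := hcL
    have heg : (e : G) * (c : G) = Δ := congrArg Subtype.val he
    have h1 : Δ * (y : G) * Δ⁻¹ = (e : G) := by
      nth_rewrite 1 [← heg]
      rw [← hcg]; group
    rw [h1]; exact e.2

lemma garside_tau (hG : IsGarsideGroup P Δ) :
    ∀ (j : ℤ) (x : G), x ∈ P → Δ ^ j * x * Δ ^ (-j) ∈ P := by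
  intro j
  induction j using Int.induction_on with
  | zero => intro x hx; simpa using hx
  | succ k ih =>
    intro x hx
    have e : Δ ^ ((k : ℤ) + 1) * x * Δ ^ (-((k : ℤ) + 1)) =
        Δ ^ (k : ℤ) * (Δ * x * Δ⁻¹) * Δ ^ (-(k : ℤ)) := by group
    rw [e]; exact ih _ (garside_tau_neg hG x hx)
  | pred k ih =>
    intro x hx
    have e : Δ ^ (-(k : ℤ) - 1) * x * Δ ^ (-(-(k : ℤ) - 1)) =
        Δ ^ (-(k : ℤ)) * (Δ⁻¹ * x * Δ) * Δ ^ (-(-(k : ℤ))) := by group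
    rw [e]; exact ih _ (garside_tau_pos hG x hx)

lemma garside_bound (hG : IsGarsideGroup P Δ) :
    ∀ x : G, x ∈ P → ∃ k : ℕ, x⁻¹ * Δ ^ (k : ℤ) ∈ P := by
  obtain ⟨hM, hfrac, hΔ, hLR, hcl⟩ := hG
  intro x hx
  suffices hall : ∀ w : P, ∃ k : ℕ, (w : G)⁻¹ * Δ ^ (k : ℤ) ∈ P by exact hall ⟨x, hx⟩
  intro w
  have hx' : w ∈ Submonoid.closure (Lset (⟨Δ, hΔ⟩ : P)) := by
    rw [hcl]; exact Submonoid.mem_top _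
  induction hx' using Submonoid.closure_induction with
  | one => exact ⟨0, by simpa using one_mem P⟩
  | mul y z hy' hz' py pz =>
    obtain ⟨ky, hky⟩ := py
    obtain ⟨kz, hkz⟩ := pz
    refine ⟨ky + kz, ?_⟩
    have e : ((y * z : P) : G)⁻¹ * Δ ^ ((ky + kz : ℕ) : ℤ) =
        ((z : G)⁻¹ * Δ ^ (kz : ℤ)) *
          (Δ ^ (-(kz : ℤ)) * ((y : G)⁻¹ * Δ ^ (ky : ℤ)) * Δ ^ (-(-(kz : ℤ)))) := by
      push_cast; group
    rw [e]
    exact mul_mem hkz (garside_tau ⟨hM, hfrac, hΔ, hLR, hcl⟩ (-(kz : ℤ)) _ hky)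
  | mem y hy =>
    obtain ⟨c, hc⟩ := hy
    have hcg : (y : G) * (c : G) = Δ := congrArg Subtype.val hc
    refine ⟨1, ?_⟩
    have e : (y : G)⁻¹ * Δ ^ ((1 : ℕ) : ℤ) = (c : G) := by
      rw [← hcg]; push_cast; group
    rw [e]; exact c.2

lemma garside_shift (hG : IsGarsideGroup P Δ) (g : G) : ∃ N : ℕ, Δ ^ (N : ℤ) * g ∈ P := by
  obtain ⟨a, b, hab⟩ := hG.2.1 g
  obtain ⟨k, hk⟩ := garside_bound hG (b : G) b.2
  refine ⟨k, ?_⟩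
  have e : Δ ^ (k : ℤ) * g =
      Δ ^ (k : ℤ) * ((a : G) * ((b : G)⁻¹ * Δ ^ (k : ℤ))) * Δ ^ (-(k : ℤ)) := by
    rw [hab]; group
  rw [e]
  exact garside_tau hG (k : ℤ) _ (mul_mem a.2 hk)

/-- Binary join in the group order `x ≤ y ↔ x⁻¹ * y ∈ P`. -/
lemma garside_join (hG : IsGarsideGroup P Δ) (a b : G) :
    ∃ d : G, a⁻¹ * d ∈ P ∧ b⁻¹ * d ∈ P ∧
      ∀ e : G, a⁻¹ * e ∈ P → b⁻¹ * e ∈ P → d⁻¹ * e ∈ P := by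
  obtain ⟨hΔ, -⟩ := hG.2.2
  obtain ⟨N1, hN1⟩ := garside_shift hG a
  obtain ⟨N2, hN2⟩ := garside_shift hG b
  set N : ℕ := N1 + N2 with hN
  have hA : Δ ^ (N : ℤ) * a ∈ P := by
    have e : Δ ^ (N : ℤ) * a = Δ ^ (N2 : ℤ) * (Δ ^ (N1 : ℤ) * a) := by
      rw [hN]; push_cast; group
    rw [e]; exact mul_mem (garside_zpow_mem hΔ (by positivity)) hN1
  have hB : Δ ^ (N : ℤ) * b ∈ P := by
    have e : Δ ^ (N : ℤ) * b = Δ ^ (N1 : ℤ) * (Δ ^ (N2 : ℤ) * b) := by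
      rw [hN]; push_cast; group
    rw [e]; exact mul_mem (garside_zpow_mem hΔ (by positivity)) hN2
  obtain ⟨d0, hd0A, hd0B, hd0U⟩ :=
    hG.1.2.2.2.2.2.1 (⟨Δ ^ (N : ℤ) * a, hA⟩ : P) (⟨Δ ^ (N : ℤ) * b, hB⟩ : P)
  refine ⟨Δ ^ (-(N : ℤ)) * (d0 : G), ?_, ?_, ?_⟩
  · obtain ⟨c, hc⟩ := hd0A
    have hcg : (Δ ^ (N : ℤ) * a) * (c : G) = (d0 : G) := congrArg Subtype.val hc
    have e : a⁻¹ * (Δ ^ (-(N : ℤ)) * (d0 : G)) = (c : G) := by rw [← hcg]; group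
    rw [e]; exact c.2
  · obtain ⟨c, hc⟩ := hd0B
    have hcg : (Δ ^ (N : ℤ) * b) * (c : G) = (d0 : G) := congrArg Subtype.val hc
    have e : b⁻¹ * (Δ ^ (-(N : ℤ)) * (d0 : G)) = (c : G) := by rw [← hcg]; group
    rw [e]; exact c.2
  · intro e hae hbe
    have hE : Δ ^ (N : ℤ) * e ∈ P := by
      have ee : Δ ^ (N : ℤ) * e = (Δ ^ (N : ℤ) * a) * (a⁻¹ * e) := by group
      rw [ee]; exact mul_mem hA hae
    have hdvdA : dvdL (⟨Δ ^ (N : ℤ) * a, hA⟩ : P) (⟨Δ ^ (N : ℤ) * e, hE⟩ : P) := by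
      refine ⟨⟨a⁻¹ * e, hae⟩, ?_⟩
      ext; show (Δ ^ (N : ℤ) * a) * (a⁻¹ * e) = Δ ^ (N : ℤ) * e; group
    have hdvdB : dvdL (⟨Δ ^ (N : ℤ) * b, hB⟩ : P) (⟨Δ ^ (N : ℤ) * e, hE⟩ : P) := by
      refine ⟨⟨b⁻¹ * e, hbe⟩, ?_⟩
      ext; show (Δ ^ (N : ℤ) * b) * (b⁻¹ * e) = Δ ^ (N : ℤ) * e; group
    obtain ⟨c, hc⟩ := hd0U _ hdvdA hdvdB
    have hcg : (d0 : G) * (c : G) = Δ ^ (N : ℤ) * e := congrArg Subtype.val hc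
    have ee : (Δ ^ (-(N : ℤ)) * (d0 : G))⁻¹ * e = (c : G) := by
      have : (c : G) = (d0 : G)⁻¹ * (Δ ^ (N : ℤ) * e) := by rw [← hcg]; group
      rw [this]; group
    rw [ee]; exact c.2

/-- Finite joins. -/
lemma garside_finJoin (hG : IsGarsideGroup P Δ) (f : ℕ → G) :
    ∀ n : ℕ, 0 < n → ∃ c : G, (∀ i, i < n → (f i)⁻¹ * c ∈ P) ∧
      ∀ e : G, (∀ i, i < n → (f i)⁻¹ * e ∈ P) → c⁻¹ * e ∈ P := by
  intro n
  induction n with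
  | zero => omega
  | succ n ih =>
    intro _
    rcases Nat.eq_zero_or_pos n with h0 | hp
    · subst h0
      refine ⟨f 0, ?_, ?_⟩
      · intro i hi
        have : i = 0 := by omega
        subst this; simpa using one_mem P
      · intro e he
        exact he 0 (by omega)
    · obtain ⟨c, hc1, hc2⟩ := ih hp
      obtain ⟨d, hd1, hd2, hd3⟩ := garside_join hG c (f n)
      refine ⟨d, ?_, ?_⟩
      · intro i hi
        rcases Nat.lt_or_ge i n with h | h
        · have e : (f i)⁻¹ * d = ((f i)⁻¹ * c) * (c⁻¹ * d) := by group
          rw [e]; exact mul_mem (hc1 i h) hd1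
        · have : i = n := by omega
          subst this; exact hd2
      · intro e he
        exact hd3 e (hc2 e (fun i hi => he i (by omega))) (he n (by omega))

/-- Key lemma: if `aⁿ Δ^{nb}` is positive then some `c` satisfies `c ≤ a c Δ^b`. -/
lemma garside_key (hG : IsGarsideGroup P Δ) (a : G) (b : ℤ) (n : ℕ) (hn : 0 < n)
    (hyp : a ^ n * Δ ^ ((n : ℤ) * b) ∈ P) :
    ∃ c : G, c⁻¹ * (a * c * Δ ^ b) ∈ P := by
  set f : ℕ → G := fun i => a ^ i * Δ ^ ((i : ℤ) * b) with hf
  obtain ⟨c, hc1, hc2⟩ := garside_finJoin hG f n hn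
  have mono : ∀ x y : G, x⁻¹ * y ∈ P → (a * x * Δ ^ b)⁻¹ * (a * y * Δ ^ b) ∈ P := by
    intro x y hxy
    have e : (a * x * Δ ^ b)⁻¹ * (a * y * Δ ^ b) = Δ ^ (-b) * (x⁻¹ * y) * Δ ^ (-(-b)) := by
      group
    rw [e]; exact garside_tau hG (-b) _ hxy
  have hfs : ∀ i : ℕ, a * f i * Δ ^ b = f (i + 1) := by
    intro i
    show a * (a ^ i * Δ ^ ((i : ℤ) * b)) * Δ ^ b = a ^ (i + 1) * Δ ^ (((i + 1 : ℕ) : ℤ) * b)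
    rw [pow_succ]
    push_cast
    rw [add_mul, one_mul, zpow_add]
    group
  have hstep : ∀ i : ℕ, (f i)⁻¹ * c ∈ P → (f (i + 1))⁻¹ * (a * c * Δ ^ b) ∈ P := by
    intro i hi
    rw [← hfs i]
    exact mono _ _ hi
  have hfn : f n ∈ P := by
    show a ^ n * Δ ^ ((n : ℤ) * b) ∈ P
    exact hyp
  have hlast : (f n)⁻¹ * (a * c * Δ ^ b) ∈ P := by
    obtain ⟨j, rfl⟩ : ∃ j, n = j + 1 := ⟨n - 1, by omega⟩
    exact hstep j (hc1 j (by omega))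
  have hmem : ∀ i, i < n → (f i)⁻¹ * (a * c * Δ ^ b) ∈ P := by
    intro i hi
    cases i with
    | zero =>
      have e0 : f 0 = 1 := by show a ^ 0 * Δ ^ (((0 : ℕ) : ℤ) * b) = 1; simp
      rw [e0]
      have e1 : (1 : G)⁻¹ * (a * c * Δ ^ b) = f n * ((f n)⁻¹ * (a * c * Δ ^ b)) := by group
      rw [e1]; exact mul_mem hfn hlast
    | succ j => exact hstep j (hc1 j (by omega))
  exact ⟨c, hc2 _ hmem⟩

/-- If `h⁻¹ Δ^t ∈ P` then `(hⁿ)⁻¹ Δ^{nt} ∈ P`. -/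
lemma garside_pow_sup (hG : IsGarsideGroup P Δ) (t : ℤ) (h : G) (hp : h⁻¹ * Δ ^ t ∈ P) :
    ∀ n : ℕ, (h ^ n)⁻¹ * Δ ^ ((n : ℤ) * t) ∈ P := by
  intro n
  induction n with
  | zero => simpa using one_mem P
  | succ n ih =>
    have e : (h ^ (n + 1))⁻¹ * Δ ^ (((n + 1 : ℕ) : ℤ) * t) =
        (h⁻¹ * Δ ^ t) * (Δ ^ (-t) * ((h ^ n)⁻¹ * Δ ^ ((n : ℤ) * t)) * Δ ^ (-(-t))) := by
      rw [pow_succ]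
      push_cast
      rw [add_mul, one_mul, zpow_add]
      group
    rw [e]
    exact mul_mem hp (garside_tau hG (-t) _ ih)

/-- If `Δ^{-t} h ∈ P` then `Δ^{-nt} hⁿ ∈ P`. -/
lemma garside_pow_inf (hG : IsGarsideGroup P Δ) (t : ℤ) (h : G) (hp : Δ ^ (-t) * h ∈ P) :
    ∀ n : ℕ, Δ ^ (-((n : ℤ) * t)) * h ^ n ∈ P := by
  intro n
  induction n with
  | zero => simpa using one_mem P
  | succ n ih =>
    have e : Δ ^ (-(((n + 1 : ℕ) : ℤ) * t)) * h ^ (n + 1) =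
        (Δ ^ (-((n : ℤ) * t)) * (Δ ^ (-t) * h) * Δ ^ (-(-((n : ℤ) * t)))) *
          (Δ ^ (-((n : ℤ) * t)) * h ^ n) := by
      rw [pow_succ']
      push_cast
      rw [add_mul, one_mul, neg_add, zpow_add]
      group
    rw [e]
    exact mul_mem (garside_tau hG (-((n : ℤ) * t)) _ hp) ih

lemma garside_isConj_pow {g h : G} (hc : IsConj g h) (n : ℕ) : IsConj (g ^ n) (h ^ n) := by
  obtain ⟨c, hc⟩ := hc
  exact ⟨c, hc.pow_right n⟩

end GarsideAux

/-- **Theorem 6.1 (2),(3).** For a Garside group `G`, `g ∈ G` and `n ≥ 1`,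
`sup_s(g) - 1 < sup_s(gⁿ)/n ≤ sup_s(g)`, and moreover
`len_s(g) - 2 < len_s(gⁿ)/n ≤ len_s(g)`. -/
theorem sups_lens_pow {G : Type*} [Group G] (P : Submonoid G) (Δ : G)
    (hG : IsGarsideGroup P Δ) (g : G) (n : ℕ) (hn : 1 ≤ n) (s u : ℤ)
    (hs : IsLeast {t : ℤ | ∃ h : G, IsConj g h ∧ gdvdL P h (Δ ^ t)} s)
    (hu : IsLeast {t : ℤ | ∃ h : G, IsConj (g ^ n) h ∧ gdvdL P h (Δ ^ t)} u) :
    ((n : ℤ) * s - (n : ℤ) < u ∧ u ≤ (n : ℤ) * s) ∧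
    (∀ r m : ℤ,
      IsGreatest {t : ℤ | ∃ h : G, IsConj g h ∧ gdvdL P (Δ ^ t) h} r →
      IsGreatest {t : ℤ | ∃ h : G, IsConj (g ^ n) h ∧ gdvdL P (Δ ^ t) h} m →
      (n : ℤ) * ((s - r) - 2) < u - m ∧ u - m ≤ (n : ℤ) * (s - r)) := by
  obtain ⟨hsm, hslb⟩ := hs
  obtain ⟨hum, hulb⟩ := hu
  obtain ⟨hΔ, -⟩ := hG.2.2
  have hn0 : (0 : ℤ) < (n : ℤ) := by exact_mod_cast hn
  -- upper bound: u ≤ n * s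
  have hu_le : u ≤ (n : ℤ) * s := by
    obtain ⟨h, hconj, hdvd⟩ := hsm
    refine hulb ⟨h ^ n, garside_isConj_pow hconj n, ?_⟩
    show (h ^ n)⁻¹ * Δ ^ ((n : ℤ) * s) ∈ P
    exact garside_pow_sup hG s h hdvd n
  -- lower bound: n * s - n < u
  have hs_lt : (n : ℤ) * s - (n : ℤ) < u := by
    obtain ⟨h', hconj', hdvd'⟩ := hum
    rw [isConj_iff] at hconj'
    obtain ⟨x, hx⟩ := hconj'
    set k := x * g * x⁻¹ with hk
    have hkn : h' = k ^ n := by rw [← hx, hk, conj_pow]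
    set t : ℤ := -(-u / (n : ℤ)) with ht
    have hdm := Int.mul_ediv_add_emod (-u) (n : ℤ)
    have hmo0 : 0 ≤ -u % (n : ℤ) := Int.emod_nonneg _ (by omega)
    have hmo1 : -u % (n : ℤ) < (n : ℤ) := Int.emod_lt_of_pos _ hn0
    have hnt : (n : ℤ) * t = u + -u % (n : ℤ) := by rw [ht, mul_neg]; linarith [hdm]
    have hyp : k⁻¹ ^ n * Δ ^ ((n : ℤ) * t) ∈ P := by
      rw [inv_pow]
      have h0 : (k ^ n)⁻¹ * Δ ^ u ∈ P := by rw [← hkn]; exact hdvd'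
      have e : ∀ K : G, K⁻¹ * Δ ^ ((n : ℤ) * t) = (K⁻¹ * Δ ^ u) * Δ ^ ((n : ℤ) * t - u) := by
        intro K
        rw [mul_assoc, ← zpow_add]
        congr 1
        ring
      rw [e (k ^ n)]
      exact mul_mem h0 (garside_zpow_mem hΔ (by linarith))
    obtain ⟨c, hc⟩ := garside_key hG k⁻¹ t n hn hyp
    have hst : s ≤ t := by
      apply hslb
      refine ⟨c⁻¹ * k * c, ?_, ?_⟩
      · rw [isConj_iff]
        exact ⟨c⁻¹ * x, by rw [hk]; group⟩
      · show (c⁻¹ * k * c)⁻¹ * Δ ^ t ∈ P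
        have e : (c⁻¹ * k * c)⁻¹ * Δ ^ t = c⁻¹ * (k⁻¹ * c * Δ ^ t) := by group
        rw [e]; exact hc
    have : (n : ℤ) * s ≤ (n : ℤ) * t := by
      exact mul_le_mul_of_nonneg_left hst hn0.le
    linarith
  refine ⟨⟨hs_lt, hu_le⟩, ?_⟩
  intro r m hr hm
  obtain ⟨hrm, hrub⟩ := hr
  obtain ⟨hmm, hmub⟩ := hm
  -- lower bound: n * r ≤ m
  have hm_ge : (n : ℤ) * r ≤ m := by
    obtain ⟨h, hconj, hdvd⟩ := hrm
    refine hmub ⟨h ^ n, garside_isConj_pow hconj n, ?_⟩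
    show (Δ ^ ((n : ℤ) * r))⁻¹ * h ^ n ∈ P
    have hp : Δ ^ (-r) * h ∈ P := by
      rw [zpow_neg]; exact hdvd
    have h2 := garside_pow_inf hG r h hp n
    rwa [zpow_neg] at h2
  -- upper bound: m < n * r + n
  have hm_lt : m < (n : ℤ) * r + (n : ℤ) := by
    obtain ⟨h', hconj', hdvd'⟩ := hmm
    rw [isConj_iff] at hconj'
    obtain ⟨x, hx⟩ := hconj'
    set k := x * g * x⁻¹ with hk
    have hkn : h' = k ^ n := by rw [← hx, hk, conj_pow]
    set t : ℤ := m / (n : ℤ) with ht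
    have hdm := Int.mul_ediv_add_emod m (n : ℤ)
    have hmo0 : 0 ≤ m % (n : ℤ) := Int.emod_nonneg _ (by omega)
    have hmo1 : m % (n : ℤ) < (n : ℤ) := Int.emod_lt_of_pos _ hn0
    have hnt : (n : ℤ) * t = m - m % (n : ℤ) := by rw [ht]; linarith [hdm]
    have h0 : (Δ ^ m)⁻¹ * k ^ n ∈ P := by rw [← hkn]; exact hdvd'
    have h1 : Δ ^ (-((n : ℤ) * t)) * k ^ n ∈ P := by
      have e2 : Δ ^ (m - (n : ℤ) * t) * (Δ ^ m)⁻¹ = Δ ^ (-((n : ℤ) * t)) := by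
        rw [← zpow_neg, ← zpow_add]
        congr 1
        ring
      have e : ∀ K : G, Δ ^ (-((n : ℤ) * t)) * K =
          Δ ^ (m - (n : ℤ) * t) * ((Δ ^ m)⁻¹ * K) := by
        intro K
        rw [← mul_assoc, e2]
      rw [e (k ^ n)]
      exact mul_mem (garside_zpow_mem hΔ (by linarith)) h0
    have hyp : k ^ n * Δ ^ ((n : ℤ) * (-t)) ∈ P := by
      have e : ∀ K : G, K * Δ ^ ((n : ℤ) * (-t)) =
          Δ ^ ((n : ℤ) * t) * (Δ ^ (-((n : ℤ) * t)) * K) * Δ ^ (-((n : ℤ) * t)) := by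
        intro K
        rw [mul_neg]
        group
      rw [e (k ^ n)]
      exact garside_tau hG ((n : ℤ) * t) _ h1
    obtain ⟨c, hc⟩ := garside_key hG k (-t) n hn hyp
    have htr : t ≤ r := by
      apply hrub
      refine ⟨c⁻¹ * k * c, ?_, ?_⟩
      · rw [isConj_iff]
        exact ⟨c⁻¹ * x, by rw [hk]; group⟩
      · show (Δ ^ t)⁻¹ * (c⁻¹ * k * c) ∈ P
        have e : (Δ ^ t)⁻¹ * (c⁻¹ * k * c) =
            Δ ^ (-t) * (c⁻¹ * (k * c * Δ ^ (-t))) * Δ ^ (-(-t)) := by group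
        rw [e]
        exact garside_tau hG (-t) _ hc
    have : (n : ℤ) * t ≤ (n : ℤ) * r := mul_le_mul_of_nonneg_left htr hn0.le
    linarith
  constructor <;> nlinarith [hu_le, hs_lt, hm_ge, hm_lt]
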